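/- arXiv:2107.03445 — 3 statements merged into one kernel-verified Lean document; each statement's English description precedes it below -/
import Mathlib

section
/- Let s > 0 be real and let v be a 2π-periodic real-valued trigonometric polynomial with zero mean. Then the following identity holds: −(2/π)∫_{0}^{2π} (|D|^{s+1/2} v)·(|D|^{s+1/2}(1+|D|)^{−1}∂_x(v²)) dx = (2/π)∫_{0}^{2π} (|D|^{s} v)² ∂_x v dx − (4/π)∫_{0}^{2π} (|D|^{s} v)·( |D|^{s}(v ∂_x v) − v·|D|^{s}∂_x v ) dx + (2/π)∫_{0}^{2π} (|D|^{s} v)·( ∂_x |D|^{s}(1+|D|)^{−1}(v²) ) dx. (This is the decomposition of the time derivative of the H^{s+1/2} norm along the truncated BBM flow into the three terms F_{1,N}, F_{2,N}, F_{3,N}.) -/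
open MeasureTheory Real

/-- The function on the torus with Fourier coefficients `c`:
`x ↦ Σ_n c(n) e^{inx}`. -/
noncomputable def toFun (c : ℤ → ℂ) : ℝ → ℂ :=
  fun x => ∑' n : ℤ, c n * Complex.exp (Complex.I * n * x)

/-- The Fourier multiplier `|D|^σ` acting on Fourier coefficients. -/
noncomputable def absD (σ : ℝ) (c : ℤ → ℂ) : ℤ → ℂ :=
  fun n => ((|(n : ℝ)| ^ σ : ℝ) : ℂ) * c n

/-- The Fourier multiplier `(1+|D|)⁻¹` acting on Fourier coefficients. -/
noncomputable def invD (c : ℤ → ℂ) : ℤ → ℂ :=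
  fun n => c n / (((1 + |(n : ℝ)|) : ℝ) : ℂ)

/-- The derivative `∂_x` acting on Fourier coefficients. -/
noncomputable def derivOp (c : ℤ → ℂ) : ℤ → ℂ :=
  fun n => (n : ℂ) * Complex.I * c n

/-- Convolution of Fourier coefficients (coefficients of the pointwise product). -/
noncomputable def convC (c d : ℤ → ℂ) : ℤ → ℂ :=
  fun m => ∑' k : ℤ, c k * d (m - k)


lemma toFun_eq_sum (a : ℤ → ℂ) (F : Finset ℤ) (ha : ∀ n ∉ F, a n = 0) (x : ℝ) :
    toFun a x = ∑ n ∈ F, a n * Complex.exp (Complex.I * n * x) := by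
  apply tsum_eq_sum; intro n hn; rw [ha n hn, zero_mul]

lemma cont_toFun (a : ℤ → ℂ) (F : Finset ℤ) (ha : ∀ n ∉ F, a n = 0) :
    Continuous (toFun a) := by
  have : toFun a = fun x : ℝ => ∑ n ∈ F, a n * Complex.exp (Complex.I * n * x) :=
    funext (toFun_eq_sum a F ha)
  rw [this]
  exact continuous_finset_sum _ fun n _ => by continuity

lemma integral_exp_int (n : ℤ) :
    (∫ x in (0:ℝ)..(2 * π), Complex.exp (Complex.I * n * x)) =
      if n = 0 then (2 * π : ℂ) else 0 := by
  rcases eq_or_ne n 0 with h | h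
  · simp [h]
  · have hc : (Complex.I * n) ≠ 0 := by
      simp [Complex.I_ne_zero, Complex.ext_iff]
      exact_mod_cast h
    rw [if_neg h]
    rw [show (fun x : ℝ => Complex.exp (Complex.I * n * x)) = fun x : ℝ => Complex.exp ((Complex.I * n) * x) from rfl]
    rw [integral_exp_mul_complex hc]
    have h2 : (Complex.I * n) * (2 * π : ℝ) = n * (2 * π * Complex.I) := by push_cast; ring
    rw [h2, Complex.exp_int_mul_two_pi_mul_I]
    simp

lemma pair_integral (a b : ℤ → ℂ) (F G : Finset ℤ)
    (ha : ∀ n ∉ F, a n = 0) (hb : ∀ n ∉ G, b n = 0) :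
    (∫ x in (0:ℝ)..(2 * π), toFun a x * toFun b x)
      = (2 * π : ℂ) * ∑ n ∈ F, a n * b (-n) := by
  have key : ∀ x : ℝ, toFun a x * toFun b x
      = ∑ n ∈ F, ∑ m ∈ G, a n * b m * Complex.exp (Complex.I * ((n + m : ℤ) : ℂ) * x) := by
    intro x
    rw [toFun_eq_sum a F ha x, toFun_eq_sum b G hb x, Finset.sum_mul_sum]
    refine Finset.sum_congr rfl fun n _ => Finset.sum_congr rfl fun m _ => ?_
    rw [mul_mul_mul_comm, ← Complex.exp_add]
    congr 1
    push_cast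
    ring
  simp only [key]
  rw [intervalIntegral.integral_finset_sum]
  · have : ∀ n ∈ F, (∫ x in (0:ℝ)..(2*π), ∑ m ∈ G, a n * b m * Complex.exp (Complex.I * ((n+m:ℤ):ℂ) * x))
        = 2 * π * (a n * b (-n)) := by
      intro n _
      rw [intervalIntegral.integral_finset_sum]
      · have : ∀ m ∈ G, (∫ x in (0:ℝ)..(2*π), a n * b m * Complex.exp (Complex.I * ((n+m:ℤ):ℂ) * x))
            = a n * b m * (if n + m = 0 then (2*π:ℂ) else 0) := by
          intro m _
          rw [intervalIntegral.integral_const_mul, integral_exp_int]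
        rw [Finset.sum_congr rfl this]
        have : ∀ m ∈ G, a n * b m * (if n + m = 0 then (2*π:ℂ) else 0)
            = if m = -n then a n * b m * (2*π:ℂ) else 0 := by
          intro m _
          by_cases h : m = -n
          · simp [h]
          · rw [if_neg h, if_neg (by omega), mul_zero]
        rw [Finset.sum_congr rfl this, Finset.sum_ite_eq' G (-n) (fun m => a n * b m * (2*π:ℂ))]
        by_cases h : -n ∈ G
        · rw [if_pos h]; ring
        · rw [if_neg h, hb _ h]; ring
      · intro m _
        apply Continuous.intervalIntegrable
        continuity
    rw [Finset.sum_congr rfl this, ← Finset.mul_sum]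
  · intro n _
    apply Continuous.intervalIntegrable
    apply continuous_finset_sum
    intro m _
    continuity

lemma triple_integral (a b d : ℤ → ℂ) (F G H : Finset ℤ)
    (ha : ∀ n ∉ F, a n = 0) (hb : ∀ n ∉ G, b n = 0) (hd : ∀ n ∉ H, d n = 0) :
    (∫ x in (0:ℝ)..(2 * π), toFun a x * toFun b x * toFun d x)
      = (2 * π : ℂ) * ∑ n ∈ F, ∑ m ∈ G, a n * b m * d (-n - m) := by
  have key : ∀ x : ℝ, toFun a x * toFun b x * toFun d x
      = ∑ n ∈ F, ∑ m ∈ G, ∑ k ∈ H,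
          a n * b m * d k * Complex.exp (Complex.I * ((n + m + k : ℤ) : ℂ) * x) := by
    intro x
    rw [toFun_eq_sum a F ha x, toFun_eq_sum b G hb x, toFun_eq_sum d H hd x,
      Finset.sum_mul_sum, Finset.sum_mul]
    refine Finset.sum_congr rfl fun n _ => ?_
    rw [Finset.sum_mul]
    refine Finset.sum_congr rfl fun m _ => ?_
    rw [Finset.mul_sum]
    refine Finset.sum_congr rfl fun k _ => ?_
    rw [show Complex.I * ((n+m+k:ℤ):ℂ) * x = (Complex.I*n*x) + ((Complex.I*m*x) + (Complex.I*k*x)) by push_cast; ring,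
      Complex.exp_add, Complex.exp_add]
    ring
  simp only [key]
  rw [intervalIntegral.integral_finset_sum (fun n _ => by
    apply Continuous.intervalIntegrable
    apply continuous_finset_sum; intro m _; apply continuous_finset_sum; intro k _; continuity)]
  rw [Finset.mul_sum]
  refine Finset.sum_congr rfl fun n _ => ?_
  rw [intervalIntegral.integral_finset_sum (fun m _ => by
    apply Continuous.intervalIntegrable
    apply continuous_finset_sum; intro k _; continuity)]
  rw [Finset.mul_sum]
  refine Finset.sum_congr rfl fun m _ => ?_
  rw [intervalIntegral.integral_finset_sum (fun k _ => by
    apply Continuous.intervalIntegrable; continuity)]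
  have : ∀ k ∈ H, (∫ x in (0:ℝ)..(2*π),
      a n * b m * d k * Complex.exp (Complex.I * ((n+m+k:ℤ):ℂ) * x))
      = if k = -n - m then a n * b m * d k * (2*π:ℂ) else 0 := by
    intro k _
    rw [intervalIntegral.integral_const_mul, integral_exp_int]
    by_cases h : k = -n - m
    · rw [if_pos (by omega), if_pos h]
    · rw [if_neg (by omega), if_neg h, mul_zero]
  rw [Finset.sum_congr rfl this, Finset.sum_ite_eq' H (-n-m) (fun k => a n * b m * d k * (2*π:ℂ))]
  by_cases h : -n - m ∈ H
  · rw [if_pos h]; ring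
  · rw [if_neg h, hd _ h]; ring

noncomputable def Acoef (s : ℝ) (n : ℤ) : ℂ := ((|(n : ℝ)| ^ s : ℝ) : ℂ)

noncomputable def w3 (s : ℝ) (p q r : ℤ) : ℂ :=
  (p : ℂ) * Acoef s p * Acoef s p - (r : ℂ) * Acoef s p * Acoef s q
    + 2 * (r : ℂ) * Acoef s p * Acoef s p - 2 * (r : ℂ) * Acoef s p * Acoef s r

lemma w3_perm_sum (s : ℝ) (p q r : ℤ) (h : p + q + r = 0) :
    w3 s p q r + w3 s q p r + w3 s q r p + w3 s r p q + w3 s p r q + w3 s r q p = 0 := by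
  have hr : (r : ℂ) = -(p : ℂ) - (q : ℂ) := by
    have h2 : ((p + q + r : ℤ) : ℂ) = 0 := by rw [h]; simp
    push_cast at h2
    linear_combination h2
  simp only [w3]
  rw [hr]
  ring

def e2 : ℤ × ℤ ≃ ℤ × ℤ :=
  ⟨fun z => (z.2, z.1), fun z => (z.2, z.1),
    fun z => by obtain ⟨p, q⟩ := z; simp; try omega,
    fun z => by obtain ⟨p, q⟩ := z; simp; try omega⟩

def e3 : ℤ × ℤ ≃ ℤ × ℤ :=
  ⟨fun z => (z.2, -z.1 - z.2), fun z => (-z.1 - z.2, z.1),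
    fun z => by obtain ⟨p, q⟩ := z; simp; try omega,
    fun z => by obtain ⟨p, q⟩ := z; simp; try omega⟩

def e4 : ℤ × ℤ ≃ ℤ × ℤ :=
  ⟨fun z => (-z.1 - z.2, z.1), fun z => (z.2, -z.1 - z.2),
    fun z => by obtain ⟨p, q⟩ := z; simp; try omega,
    fun z => by obtain ⟨p, q⟩ := z; simp; try omega⟩

def e5 : ℤ × ℤ ≃ ℤ × ℤ :=
  ⟨fun z => (z.1, -z.1 - z.2), fun z => (z.1, -z.1 - z.2),
    fun z => by obtain ⟨p, q⟩ := z; simp; try omega,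
    fun z => by obtain ⟨p, q⟩ := z; simp; try omega⟩

def e6 : ℤ × ℤ ≃ ℤ × ℤ :=
  ⟨fun z => (-z.1 - z.2, z.2), fun z => (-z.1 - z.2, z.2),
    fun z => by obtain ⟨p, q⟩ := z; simp; try omega,
    fun z => by obtain ⟨p, q⟩ := z; simp; try omega⟩

lemma summable_mulC (S : Finset ℤ) (c : ℤ → ℂ) (hc : ∀ n ∉ S, c n = 0)
    (u : ℤ × ℤ → ℂ) :
    Summable (fun z : ℤ × ℤ => u z * (c z.1 * c z.2 * c (-z.1 - z.2))) := by
  apply summable_of_ne_finset_zero (s := S ×ˢ S)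
  intro z hz
  rw [Finset.mem_product] at hz
  by_cases h1 : z.1 ∈ S
  · have h2 : z.2 ∉ S := fun h => hz ⟨h1, h⟩
    simp [hc _ h2]
  · simp [hc _ h1]

lemma key_tsum (s : ℝ) (c : ℤ → ℂ) (S : Finset ℤ) (hc : ∀ n ∉ S, c n = 0) :
    ∑' z : ℤ × ℤ, w3 s z.1 z.2 (-z.1 - z.2) * (c z.1 * c z.2 * c (-z.1 - z.2)) = 0 := by
  set f : ℤ × ℤ → ℂ :=
    fun z => w3 s z.1 z.2 (-z.1 - z.2) * (c z.1 * c z.2 * c (-z.1 - z.2)) with hf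
  set C : ℤ × ℤ → ℂ := fun z => c z.1 * c z.2 * c (-z.1 - z.2) with hC
  have h2 : ∑' z : ℤ × ℤ, w3 s z.2 z.1 (-z.1 - z.2) * C z = ∑' z, f z := by
    rw [← Equiv.tsum_eq e2 f]
    refine tsum_congr ?_
    rintro ⟨p, q⟩
    simp only [hC, hf, e2, Equiv.coe_fn_mk]
    rw [show (-q - p : ℤ) = -p - q from by ring]
    ring
  have h3 : ∑' z : ℤ × ℤ, w3 s z.2 (-z.1 - z.2) z.1 * C z = ∑' z, f z := by
    rw [← Equiv.tsum_eq e3 f]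
    refine tsum_congr ?_
    rintro ⟨p, q⟩
    simp only [hC, hf, e3, Equiv.coe_fn_mk]
    rw [show (-q - (-p - q) : ℤ) = p from by ring]
    ring
  have h4 : ∑' z : ℤ × ℤ, w3 s (-z.1 - z.2) z.1 z.2 * C z = ∑' z, f z := by
    rw [← Equiv.tsum_eq e4 f]
    refine tsum_congr ?_
    rintro ⟨p, q⟩
    simp only [hC, hf, e4, Equiv.coe_fn_mk]
    rw [show (-(-p - q) - p : ℤ) = q from by ring]
    ring
  have h5 : ∑' z : ℤ × ℤ, w3 s z.1 (-z.1 - z.2) z.2 * C z = ∑' z, f z := by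
    rw [← Equiv.tsum_eq e5 f]
    refine tsum_congr ?_
    rintro ⟨p, q⟩
    simp only [hC, hf, e5, Equiv.coe_fn_mk]
    rw [show (-p - (-p - q) : ℤ) = q from by ring]
    ring
  have h6 : ∑' z : ℤ × ℤ, w3 s (-z.1 - z.2) z.2 z.1 * C z = ∑' z, f z := by
    rw [← Equiv.tsum_eq e6 f]
    refine tsum_congr ?_
    rintro ⟨p, q⟩
    simp only [hC, hf, e6, Equiv.coe_fn_mk]
    rw [show (-(-p - q) - q : ℤ) = p from by ring]
    ring
  have hzero : ∑' z : ℤ × ℤ,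
      (w3 s z.1 z.2 (-z.1 - z.2) + w3 s z.2 z.1 (-z.1 - z.2) + w3 s z.2 (-z.1 - z.2) z.1
        + w3 s (-z.1 - z.2) z.1 z.2 + w3 s z.1 (-z.1 - z.2) z.2
        + w3 s (-z.1 - z.2) z.2 z.1) * C z = 0 := by
    have : ∀ z : ℤ × ℤ,
        (w3 s z.1 z.2 (-z.1 - z.2) + w3 s z.2 z.1 (-z.1 - z.2) + w3 s z.2 (-z.1 - z.2) z.1
          + w3 s (-z.1 - z.2) z.1 z.2 + w3 s z.1 (-z.1 - z.2) z.2
          + w3 s (-z.1 - z.2) z.2 z.1) * C z = 0 := by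
      intro z
      rw [w3_perm_sum s z.1 z.2 (-z.1 - z.2) (by ring), zero_mul]
    simp only [this, tsum_zero]
  have hexp : ∑' z : ℤ × ℤ,
      (w3 s z.1 z.2 (-z.1 - z.2) + w3 s z.2 z.1 (-z.1 - z.2) + w3 s z.2 (-z.1 - z.2) z.1
        + w3 s (-z.1 - z.2) z.1 z.2 + w3 s z.1 (-z.1 - z.2) z.2
        + w3 s (-z.1 - z.2) z.2 z.1) * C z
      = (∑' z, f z) + (∑' z, f z) + (∑' z, f z) + (∑' z, f z) + (∑' z, f z)
        + (∑' z, f z) := by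
    have s1 := summable_mulC S c hc (fun z => w3 s z.1 z.2 (-z.1 - z.2))
    have s2 := summable_mulC S c hc (fun z => w3 s z.2 z.1 (-z.1 - z.2))
    have s3 := summable_mulC S c hc (fun z => w3 s z.2 (-z.1 - z.2) z.1)
    have s4 := summable_mulC S c hc (fun z => w3 s (-z.1 - z.2) z.1 z.2)
    have s5 := summable_mulC S c hc (fun z => w3 s z.1 (-z.1 - z.2) z.2)
    have s6 := summable_mulC S c hc (fun z => w3 s (-z.1 - z.2) z.2 z.1)
    simp only [add_mul]
    rw [Summable.tsum_add (((((s1.add s2).add s3).add s4).add s5)) s6,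
      Summable.tsum_add ((((s1.add s2).add s3).add s4)) s5,
      Summable.tsum_add (((s1.add s2).add s3)) s4,
      Summable.tsum_add ((s1.add s2)) s3,
      Summable.tsum_add s1 s2]
    rw [h2, h3, h4, h5, h6]
  rw [hexp] at hzero
  have : (6 : ℂ) * ∑' z, f z = 0 := by linear_combination hzero
  have h6ne : (6 : ℂ) ≠ 0 := by norm_num
  exact (mul_eq_zero.mp this).resolve_left h6ne

lemma conv_eq_sum (a b : ℤ → ℂ) (F : Finset ℤ) (ha : ∀ n ∉ F, a n = 0) (m : ℤ) :
    convC a b m = ∑ k ∈ F, a k * b (m - k) := by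
  apply tsum_eq_sum; intro k hk; rw [ha k hk, zero_mul]

lemma conv_supp (N : ℕ) (a b : ℤ → ℂ)
    (ha : ∀ n ∉ Finset.Icc (-(N : ℤ)) N, a n = 0)
    (hb : ∀ n ∉ Finset.Icc (-(N : ℤ)) N, b n = 0) :
    ∀ m ∉ Finset.Icc (-(2 * N : ℤ)) (2 * N), convC a b m = 0 := by
  intro m hm
  have h : ∀ k : ℤ, a k * b (m - k) = 0 := by
    intro k
    by_cases hk : k ∈ Finset.Icc (-(N : ℤ)) N
    · rw [hb (m - k) (by simp only [Finset.mem_Icc] at *; omega), mul_zero]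
    · rw [ha k hk, zero_mul]
  simp only [convC, h, tsum_zero]

lemma rpow_split (s : ℝ) (hs : 0 < s) (x : ℝ) (hx : 0 ≤ x) :
    x ^ (s + 1 / 2) * x ^ (s + 1 / 2) = x ^ s * x ^ s * x := by
  rcases hx.eq_or_lt with h | h
  · rw [← h, Real.zero_rpow (by linarith), Real.zero_rpow (ne_of_gt hs)]; ring
  · have h1 : x ^ (s + 1 / 2) * x ^ (s + 1 / 2) = x ^ (s + 1 / 2 + (s + 1 / 2)) :=
      (Real.rpow_add h _ _).symm
    have h2 : x ^ (s + s + 1) = x ^ s * x ^ s * x := by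
      rw [Real.rpow_add h, Real.rpow_add h, Real.rpow_one]
    rw [h1, show s + 1 / 2 + (s + 1 / 2) = s + s + 1 by ring, h2]

/-- Decomposition of the time derivative of the `H^{s+1/2}` norm along the
truncated BBM flow into the three terms `F_{1,N}`, `F_{2,N}`, `F_{3,N}`. -/
theorem statement0 (s : ℝ) (hs : 0 < s) (c : ℤ → ℂ)
    (hfin : ∃ N : ℕ, ∀ n : ℤ, (N : ℤ) < |n| → c n = 0)
    (hzero : c 0 = 0)
    (hreal : ∀ n : ℤ, c (-n) = (starRingEnd ℂ) (c n)) :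
    -(2 / (π : ℂ)) * ∫ x in (0:ℝ)..(2 * π),
        toFun (absD (s + 1/2) c) x *
          toFun (absD (s + 1/2) (invD (derivOp (convC c c)))) x
      = (2 / (π : ℂ)) * (∫ x in (0:ℝ)..(2 * π),
            (toFun (absD s c) x) ^ 2 * toFun (derivOp c) x)
        - (4 / (π : ℂ)) * (∫ x in (0:ℝ)..(2 * π),
            toFun (absD s c) x *
              (toFun (absD s (convC c (derivOp c))) x
                - toFun c x * toFun (absD s (derivOp c)) x))
        + (2 / (π : ℂ)) * (∫ x in (0:ℝ)..(2 * π),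
            toFun (absD s c) x * toFun (derivOp (absD s (invD (convC c c)))) x) := by
  obtain ⟨N, hN⟩ := hfin
  set S : Finset ℤ := Finset.Icc (-(N : ℤ)) N with hS
  set T : Finset ℤ := Finset.Icc (-(2 * N : ℤ)) (2 * N) with hT
  have hc : ∀ n ∉ S, c n = 0 := by
    intro n hn
    apply hN
    simp only [hS, Finset.mem_Icc] at hn
    rcases abs_cases n with ⟨h1, h2⟩ | ⟨h1, h2⟩ <;> omega
  have ha1 : ∀ n ∉ S, absD (s + 1/2) c n = 0 := fun n hn => by simp [absD, hc n hn]
  have hcc : ∀ m ∉ T, convC c c m = 0 := conv_supp N c c hc hc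
  have hb1 : ∀ n ∉ T, absD (s + 1/2) (invD (derivOp (convC c c))) n = 0 :=
    fun n hn => by simp [absD, invD, derivOp, hcc n hn]
  have he : ∀ n ∉ S, absD s c n = 0 := fun n hn => by simp [absD, hc n hn]
  have hd : ∀ n ∉ S, derivOp c n = 0 := fun n hn => by simp [derivOp, hc n hn]
  have hcd : ∀ m ∉ T, convC c (derivOp c) m = 0 := conv_supp N c (derivOp c) hc hd
  have hb2 : ∀ n ∉ T, absD s (convC c (derivOp c)) n = 0 :=
    fun n hn => by simp [absD, hcd n hn]
  have hb3 : ∀ n ∉ S, absD s (derivOp c) n = 0 := fun n hn => by simp [absD, hd n hn]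
  have hb4 : ∀ n ∉ T, derivOp (absD s (invD (convC c c))) n = 0 :=
    fun n hn => by simp [absD, invD, derivOp, hcc n hn]
  -- the five canonical summands
  set fL : ℤ × ℤ → ℂ := fun z =>
    ((|(z.1 : ℝ)| ^ (s + 1/2) : ℝ) : ℂ) * c z.1 *
      (((|((-z.1 : ℤ) : ℝ)| ^ (s + 1/2) : ℝ) : ℂ) *
        ((((-z.1 : ℤ) : ℂ) * Complex.I * (c z.2 * c (-z.1 - z.2))) /
          (((1 + |((-z.1 : ℤ) : ℝ)| : ℝ)) : ℂ))) with hfL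
  set f1 : ℤ × ℤ → ℂ := fun z =>
    absD s c z.1 * absD s c z.2 * derivOp c (-z.1 - z.2) with hf1
  set f2a : ℤ × ℤ → ℂ := fun z =>
    ((|(z.1 : ℝ)| ^ s : ℝ) : ℂ) * c z.1 *
      (((|((-z.1 : ℤ) : ℝ)| ^ s : ℝ) : ℂ) * (c z.2 * derivOp c (-z.1 - z.2))) with hf2a
  set f2b : ℤ × ℤ → ℂ := fun z =>
    absD s c z.1 * c z.2 * absD s (derivOp c) (-z.1 - z.2) with hf2b
  set f3 : ℤ × ℤ → ℂ := fun z =>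
    ((|(z.1 : ℝ)| ^ s : ℝ) : ℂ) * c z.1 *
      (((-z.1 : ℤ) : ℂ) * Complex.I *
        (((|((-z.1 : ℤ) : ℝ)| ^ s : ℝ) : ℂ) *
          ((c z.2 * c (-z.1 - z.2)) / (((1 + |((-z.1 : ℤ) : ℝ)| : ℝ)) : ℂ)))) with hf3
  -- support facts
  have hzs : ∀ z : ℤ × ℤ, z ∉ S ×ˢ S → (z.1 ∉ S ∨ z.2 ∉ S) := by
    intro z hz
    rw [Finset.mem_product] at hz
    by_cases h1 : z.1 ∈ S
    · exact Or.inr fun h2 => hz ⟨h1, h2⟩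
    · exact Or.inl h1
  have hfLs : ∀ z ∉ S ×ˢ S, fL z = 0 := by
    intro z hz
    rcases hzs z hz with h | h <;> simp [hfL, hc _ h]
  have hf1s : ∀ z ∉ S ×ˢ S, f1 z = 0 := by
    intro z hz
    rcases hzs z hz with h | h <;> simp [hf1, absD, derivOp, hc _ h]
  have hf2as : ∀ z ∉ S ×ˢ S, f2a z = 0 := by
    intro z hz
    rcases hzs z hz with h | h <;> simp [hf2a, derivOp, hc _ h]
  have hf2bs : ∀ z ∉ S ×ˢ S, f2b z = 0 := by
    intro z hz
    rcases hzs z hz with h | h <;> simp [hf2b, absD, derivOp, hc _ h]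
  have hf3s : ∀ z ∉ S ×ˢ S, f3 z = 0 := by
    intro z hz
    rcases hzs z hz with h | h <;> simp [hf3, hc _ h]
  -- finite sums to tsums
  have hTL : ∑ n ∈ S, absD (s + 1/2) c n * absD (s + 1/2) (invD (derivOp (convC c c))) (-n)
      = ∑' z : ℤ × ℤ, fL z := by
    rw [tsum_eq_sum hfLs, Finset.sum_product]
    refine Finset.sum_congr rfl fun n hn => ?_
    simp only [hfL, absD, invD, derivOp]
    rw [conv_eq_sum c c S hc]
    simp only [Finset.mul_sum, Finset.sum_div]
  have hT1 : ∑ n ∈ S, ∑ m ∈ S, absD s c n * absD s c m * derivOp c (-n - m)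
      = ∑' z : ℤ × ℤ, f1 z := by
    rw [tsum_eq_sum hf1s, Finset.sum_product]
  have hT2a : ∑ n ∈ S, absD s c n * absD s (convC c (derivOp c)) (-n)
      = ∑' z : ℤ × ℤ, f2a z := by
    rw [tsum_eq_sum hf2as, Finset.sum_product]
    refine Finset.sum_congr rfl fun n hn => ?_
    simp only [hf2a, absD]
    rw [conv_eq_sum c (derivOp c) S hc]
    simp only [Finset.mul_sum]
  have hT2b : ∑ n ∈ S, ∑ m ∈ S, absD s c n * c m * absD s (derivOp c) (-n - m)
      = ∑' z : ℤ × ℤ, f2b z := by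
    rw [tsum_eq_sum hf2bs, Finset.sum_product]
  have hT3 : ∑ n ∈ S, absD s c n * derivOp (absD s (invD (convC c c))) (-n)
      = ∑' z : ℤ × ℤ, f3 z := by
    rw [tsum_eq_sum hf3s, Finset.sum_product]
    refine Finset.sum_congr rfl fun n hn => ?_
    simp only [hf3, absD, invD, derivOp]
    rw [conv_eq_sum c c S hc]
    simp only [Finset.mul_sum, Finset.sum_div]
  -- integrals
  have hIL := pair_integral (absD (s + 1/2) c)
    (absD (s + 1/2) (invD (derivOp (convC c c)))) S T ha1 hb1
  have hI1 := triple_integral (absD s c) (absD s c) (derivOp c) S S S he he hd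
  have hI2a := pair_integral (absD s c) (absD s (convC c (derivOp c))) S T he hb2
  have hI2b := triple_integral (absD s c) c (absD s (derivOp c)) S S S he hc hb3
  have hI3 := pair_integral (absD s c) (derivOp (absD s (invD (convC c c)))) S T he hb4
  have hsplit : ∀ x : ℝ, toFun (absD s c) x *
      (toFun (absD s (convC c (derivOp c))) x - toFun c x * toFun (absD s (derivOp c)) x)
      = toFun (absD s c) x * toFun (absD s (convC c (derivOp c))) x
        - toFun (absD s c) x * toFun c x * toFun (absD s (derivOp c)) x := fun x => by ring
  have hint2a : IntervalIntegrable
      (fun x => toFun (absD s c) x * toFun (absD s (convC c (derivOp c))) x)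
      volume 0 (2 * π) :=
    ((cont_toFun _ S he).mul (cont_toFun _ T hb2)).intervalIntegrable _ _
  have hint2b : IntervalIntegrable
      (fun x => toFun (absD s c) x * toFun c x * toFun (absD s (derivOp c)) x)
      volume 0 (2 * π) :=
    (((cont_toFun _ S he).mul (cont_toFun _ S hc)).mul (cont_toFun _ S hb3)).intervalIntegrable _ _
  simp only [pow_two, hsplit]
  rw [intervalIntegral.integral_sub hint2a hint2b]
  rw [hIL, hI1, hI2a, hI2b, hI3, hTL, hT1, hT2a, hT2b, hT3]
  -- pointwise identity
  have key := key_tsum s c S hc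
  have pointwise : ∀ z : ℤ × ℤ,
      (-4 : ℂ) * fL z + (-4) * f1 z + 8 * f2a z + (-8) * f2b z + (-4) * f3 z
        = (4 * Complex.I) *
          (w3 s z.1 z.2 (-z.1 - z.2) * (c z.1 * c z.2 * c (-z.1 - z.2))) := by
    rintro ⟨p, q⟩
    simp only [hfL, hf1, hf2a, hf2b, hf3, w3, Acoef, absD, derivOp, Int.cast_neg, abs_neg]
    have hB : ((|(p : ℝ)| ^ (s + 1/2) : ℝ) : ℂ) * ((|(p : ℝ)| ^ (s + 1/2) : ℝ) : ℂ)
        = ((|(p : ℝ)| ^ s : ℝ) : ℂ) * ((|(p : ℝ)| ^ s : ℝ) : ℂ) * ((|(p : ℝ)| : ℝ) : ℂ) := by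
      exact_mod_cast congrArg Complex.ofReal (rpow_split s hs |(p : ℝ)| (abs_nonneg _))
    have hu : ((1 + |(p : ℝ)| : ℝ) : ℂ) ≠ 0 := by
      rw [Complex.ofReal_ne_zero]
      positivity
    have hue : ((1 + |(p : ℝ)| : ℝ) : ℂ) = 1 + ((|(p : ℝ)| : ℝ) : ℂ) := by push_cast; ring
    rw [hue]
    have hu2 : (1 : ℂ) + ((|(p : ℝ)| : ℝ) : ℂ) ≠ 0 := by rw [← hue]; exact hu
    generalize hBB : ((|(p : ℝ)| ^ (s + 1/2) : ℝ) : ℂ) = B at hB ⊢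
    generalize hAA : ((|(p : ℝ)| ^ s : ℝ) : ℂ) = A at hB ⊢
    generalize hXX : ((|(p : ℝ)| : ℝ) : ℂ) = X at hB hu2 ⊢
    field_simp
    linear_combination (4 * (p : ℂ) * c p * c q * c (-p - q)) * hB
  -- summabilities
  have sL : Summable fL := summable_of_ne_finset_zero hfLs
  have s1 : Summable f1 := summable_of_ne_finset_zero hf1s
  have s2a : Summable f2a := summable_of_ne_finset_zero hf2as
  have s2b : Summable f2b := summable_of_ne_finset_zero hf2bs
  have s3 : Summable f3 := summable_of_ne_finset_zero hf3s
  have A1 : Summable (fun z => (-4 : ℂ) * fL z) := sL.mul_left _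
  have A2 : Summable (fun z => (-4 : ℂ) * f1 z) := s1.mul_left _
  have A3 : Summable (fun z => (8 : ℂ) * f2a z) := s2a.mul_left _
  have A4 : Summable (fun z => (-8 : ℂ) * f2b z) := s2b.mul_left _
  have A5 : Summable (fun z => (-4 : ℂ) * f3 z) := s3.mul_left _
  have hcomb : (-4 : ℂ) * (∑' z, fL z) + (-4) * (∑' z, f1 z) + 8 * (∑' z, f2a z)
      + (-8) * (∑' z, f2b z) + (-4) * (∑' z, f3 z) = 0 := by
    have e1 : ∑' z : ℤ × ℤ, ((-4 : ℂ) * fL z + (-4) * f1 z + 8 * f2a z + (-8) * f2b z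
        + (-4) * f3 z)
        = (-4 : ℂ) * (∑' z, fL z) + (-4) * (∑' z, f1 z) + 8 * (∑' z, f2a z)
          + (-8) * (∑' z, f2b z) + (-4) * (∑' z, f3 z) := by
      rw [Summable.tsum_add (((A1.add A2).add A3).add A4) A5,
        Summable.tsum_add ((A1.add A2).add A3) A4,
        Summable.tsum_add (A1.add A2) A3,
        Summable.tsum_add A1 A2,
        tsum_mul_left, tsum_mul_left, tsum_mul_left, tsum_mul_left, tsum_mul_left]
    rw [← e1, tsum_congr pointwise, tsum_mul_left, key, mul_zero]
  have hπ : (π : ℂ) ≠ 0 := Complex.ofReal_ne_zero.mpr pi_ne_zero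
  field_simp
  linear_combination (1 / 2 : ℂ) * hcomb
end

section
/- Let M ∈ ℕ and let x, y > 0 with x + y > 1. Let p, q ∈ [1,∞] (with the convention 1/∞ = 0) be such that max(1/p, 1/q) < x and max(1 − 1/p, 1 − 1/q) < y. Then there is a constant c = c(p,q,x,y) > 0 such that for all m ∈ ℤ: Σ_{n∈ℤ} ⟨n⟩^{−x}⟨m−n⟩^{−y} ≤ c·⟨m⟩^{−r}, where r := min(x − 1/p, 1/q − (1−y)). -/
open scoped ENNReal

/-- The Japanese bracket `⟨n⟩ = (1+n²)^{1/2}` of an integer. -/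
noncomputable def jap (n : ℤ) : ℝ := Real.sqrt (1 + (n : ℝ) ^ 2)

lemma jap_pos (n : ℤ) : 0 < jap n := Real.sqrt_pos.mpr (by positivity)

lemma one_le_jap (n : ℤ) : 1 ≤ jap n := Real.one_le_sqrt.mpr (by nlinarith [sq_nonneg ((n:ℝ))])

lemma abs_le_jap (n : ℤ) : |(n : ℝ)| ≤ jap n := by
  rw [← Real.sqrt_sq_eq_abs]
  exact Real.sqrt_le_sqrt (by nlinarith)

lemma jap_sq (n : ℤ) : jap n ^ 2 = 1 + (n : ℝ) ^ 2 :=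
  Real.sq_sqrt (by positivity)

lemma jap_triangle (m n : ℤ) : jap m ≤ jap n + jap (m - n) := by
  have h1 : jap m ^ 2 = 1 + (m : ℝ) ^ 2 := jap_sq m
  have h2 : jap n ^ 2 = 1 + (n : ℝ) ^ 2 := jap_sq n
  have h3 : jap (m - n) ^ 2 = 1 + ((m : ℝ) - n) ^ 2 := by
    rw [jap_sq]; push_cast; ring
  have hmul : (n : ℝ) * ((m : ℝ) - n) ≤ jap n * jap (m - n) := by
    calc (n : ℝ) * ((m : ℝ) - n) ≤ |(n : ℝ)| * |(m : ℝ) - n| := by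
          rw [← abs_mul]; exact le_abs_self _
      _ ≤ jap n * jap (m - n) := by
          apply mul_le_mul _ _ (abs_nonneg _) (jap_pos n).le
          · exact abs_le_jap n
          · have := abs_le_jap (m - n); push_cast at this ⊢; linarith
  nlinarith [jap_pos m, jap_pos n, jap_pos (m - n), sq_nonneg (jap m - jap n - jap (m - n))]

lemma jap_summable {s : ℝ} (hs : 1 < s) : Summable (fun n : ℤ => jap n ^ (-s)) := by
  have hbase : Summable (fun n : ℤ => ((1 : ℝ) + |(n : ℝ)|) ^ (-s)) := by
    have hnat : Summable (fun k : ℕ => ((1 : ℝ) + (k : ℝ)) ^ (-s)) := by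
      have h := (Real.summable_nat_rpow (p := -s)).mpr (by linarith)
      have := h.comp_injective (add_right_injective 1)
      refine this.congr fun k => ?_
      simp only [Function.comp]
      push_cast
      ring_nf
    apply Summable.of_nat_of_neg
    · refine hnat.congr fun k => ?_; simp
    · refine hnat.congr fun k => ?_; simp
  refine Summable.of_nonneg_of_le (fun n => (Real.rpow_pos_of_pos (jap_pos n) _).le)
    (fun n => ?_) (hbase.mul_left ((2:ℝ) ^ s))
  have hhalf : ((1 : ℝ) + |(n : ℝ)|) / 2 ≤ jap n := by
    have := one_le_jap n; have := abs_le_jap n; linarith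
  have hpos : (0:ℝ) < ((1 : ℝ) + |(n : ℝ)|) / 2 := by positivity
  calc jap n ^ (-s) ≤ (((1 : ℝ) + |(n : ℝ)|) / 2) ^ (-s) :=
        Real.rpow_le_rpow_of_nonpos hpos hhalf (by linarith)
    _ = (2:ℝ) ^ s * ((1 : ℝ) + |(n : ℝ)|) ^ (-s) := by
        rw [Real.div_rpow (by positivity) (by norm_num), Real.rpow_neg (by norm_num : (0:ℝ) ≤ 2)]
        field_simp

lemma jap_key (x y r : ℝ) (hrx : r ≤ x) (hry : r ≤ y) (hr : 0 ≤ r) (m n : ℤ) :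
    jap n ^ (-x) * jap (m - n) ^ (-y)
      ≤ 2 ^ r * jap m ^ (-r) * (jap n ^ (-(x + y - r)) + jap (m - n) ^ (-(x + y - r))) := by
  have hn := jap_pos n
  have hmn := jap_pos (m - n)
  have hm := jap_pos m
  have htri := jap_triangle m n
  have h2r : (0:ℝ) < 2 ^ r * jap m ^ (-r) := by positivity
  rcases le_total (jap (m - n)) (jap n) with hc | hc
  · -- jap n is the big one; jap m ≤ 2 * jap n
    have hbig : jap m / 2 ≤ jap n := by linarith
    have e1 : jap n ^ (-x) = jap n ^ (-r) * jap n ^ (-(x - r)) := by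
      rw [← Real.rpow_add hn]; ring_nf
    have e2 : jap n ^ (-r) ≤ 2 ^ r * jap m ^ (-r) := by
      calc jap n ^ (-r) ≤ (jap m / 2) ^ (-r) :=
            Real.rpow_le_rpow_of_nonpos (by positivity) hbig (by linarith)
        _ = 2 ^ r * jap m ^ (-r) := by
            rw [Real.div_rpow hm.le (by norm_num), Real.rpow_neg (by norm_num : (0:ℝ) ≤ 2)]
            field_simp
    have e3 : jap n ^ (-(x - r)) ≤ jap (m - n) ^ (-(x - r)) :=
      Real.rpow_le_rpow_of_nonpos hmn hc (by linarith)
    have e4 : jap (m - n) ^ (-(x - r)) * jap (m - n) ^ (-y) = jap (m - n) ^ (-(x + y - r)) := by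
      rw [← Real.rpow_add hmn]; ring_nf
    calc jap n ^ (-x) * jap (m - n) ^ (-y)
        = jap n ^ (-r) * (jap n ^ (-(x - r)) * jap (m - n) ^ (-y)) := by rw [e1]; ring
      _ ≤ (2 ^ r * jap m ^ (-r)) * (jap (m - n) ^ (-(x - r)) * jap (m - n) ^ (-y)) := by
          apply mul_le_mul e2 _ (by positivity) h2r.le
          exact mul_le_mul_of_nonneg_right e3 (by positivity)
      _ = (2 ^ r * jap m ^ (-r)) * jap (m - n) ^ (-(x + y - r)) := by rw [e4]
      _ ≤ _ := by
          have : (0:ℝ) ≤ jap n ^ (-(x + y - r)) := by positivity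
          nlinarith
  · -- jap (m - n) is the big one
    have hbig : jap m / 2 ≤ jap (m - n) := by linarith
    have e1 : jap (m - n) ^ (-y) = jap (m - n) ^ (-r) * jap (m - n) ^ (-(y - r)) := by
      rw [← Real.rpow_add hmn]; ring_nf
    have e2 : jap (m - n) ^ (-r) ≤ 2 ^ r * jap m ^ (-r) := by
      calc jap (m - n) ^ (-r) ≤ (jap m / 2) ^ (-r) :=
            Real.rpow_le_rpow_of_nonpos (by positivity) hbig (by linarith)
        _ = 2 ^ r * jap m ^ (-r) := by
            rw [Real.div_rpow hm.le (by norm_num), Real.rpow_neg (by norm_num : (0:ℝ) ≤ 2)]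
            field_simp
    have e3 : jap (m - n) ^ (-(y - r)) ≤ jap n ^ (-(y - r)) :=
      Real.rpow_le_rpow_of_nonpos hn hc (by linarith)
    have e4 : jap n ^ (-x) * jap n ^ (-(y - r)) = jap n ^ (-(x + y - r)) := by
      rw [← Real.rpow_add hn]; ring_nf
    calc jap n ^ (-x) * jap (m - n) ^ (-y)
        = jap (m - n) ^ (-r) * (jap n ^ (-x) * jap (m - n) ^ (-(y - r))) := by rw [e1]; ring
      _ ≤ (2 ^ r * jap m ^ (-r)) * (jap n ^ (-x) * jap n ^ (-(y - r))) := by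
          apply mul_le_mul e2 _ (by positivity) h2r.le
          exact mul_le_mul_of_nonneg_left e3 (by positivity)
      _ = (2 ^ r * jap m ^ (-r)) * jap n ^ (-(x + y - r)) := by rw [e4]
      _ ≤ _ := by
          have : (0:ℝ) ≤ jap (m - n) ^ (-(x + y - r)) := by positivity
          nlinarith

/-- Decay of discrete convolutions: full-sum estimate. -/
theorem statement2 (M : ℕ) (x y : ℝ) (hx : 0 < x) (hy : 0 < y) (hxy : 1 < x + y)
    (p q : ℝ≥0∞) (hp : 1 ≤ p) (hq : 1 ≤ q)
    (hpq_x : max (p⁻¹).toReal (q⁻¹).toReal < x)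
    (hpq_y : max (1 - (p⁻¹).toReal) (1 - (q⁻¹).toReal) < y) :
    ∃ c > 0, ∀ m : ℤ,
      ∑' n : ℤ, jap n ^ (-x) * jap (m - n) ^ (-y)
        ≤ c * jap m ^ (-(min (x - (p⁻¹).toReal) ((q⁻¹).toReal - (1 - y)))) := by
  set a := (p⁻¹).toReal with ha_def
  set b := (q⁻¹).toReal with hb_def
  have ha0 : 0 ≤ a := ENNReal.toReal_nonneg
  have hb1 : b ≤ 1 := by
    have h1 : q⁻¹ ≤ 1 := ENNReal.inv_le_one.mpr hq
    calc b ≤ (1 : ℝ≥0∞).toReal := ENNReal.toReal_mono (by simp) h1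
      _ = 1 := by simp
  have hax : a < x := lt_of_le_of_lt (le_max_left _ _) hpq_x
  have hay : 1 - a < y := lt_of_le_of_lt (le_max_left _ _) hpq_y
  have hby : 1 - b < y := lt_of_le_of_lt (le_max_right _ _) hpq_y
  set r := min (x - a) (b - (1 - y)) with hr_def
  have hr0 : 0 < r := lt_min (by linarith) (by linarith)
  have hrx : r ≤ x := le_trans (min_le_left _ _) (by linarith)
  have hry : r ≤ y := le_trans (min_le_right _ _) (by linarith)
  set s := x + y - r with hs_def
  have hs1 : 1 < s := by
    have : r ≤ x - a := min_le_left _ _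
    simp only [hs_def]; linarith
  have hg : Summable (fun n : ℤ => jap n ^ (-s)) := jap_summable hs1
  set T := ∑' n : ℤ, jap n ^ (-s) with hT_def
  have hT0 : 0 < T := by
    refine Summable.tsum_pos hg (fun n => (Real.rpow_pos_of_pos (jap_pos n) _).le) 0 ?_
    exact Real.rpow_pos_of_pos (jap_pos 0) _
  refine ⟨2 ^ r * (2 * T), by positivity, fun m => ?_⟩
  have hh : Summable (fun n : ℤ => jap (m - n) ^ (-s)) := by
    have := (Equiv.subLeft m).summable_iff.mpr hg
    exact this
  have hhT : ∑' n : ℤ, jap (m - n) ^ (-s) = T := by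
    have := (Equiv.subLeft m).tsum_eq (fun k : ℤ => jap k ^ (-s))
    exact this
  have hkey : ∀ n : ℤ, jap n ^ (-x) * jap (m - n) ^ (-y)
      ≤ 2 ^ r * jap m ^ (-r) * (jap n ^ (-s) + jap (m - n) ^ (-s)) :=
    fun n => jap_key x y r hrx hry hr0.le m n
  have hGsum : Summable (fun n : ℤ =>
      2 ^ r * jap m ^ (-r) * (jap n ^ (-s) + jap (m - n) ^ (-s))) :=
    (hg.add hh).mul_left _
  have hFsum : Summable (fun n : ℤ => jap n ^ (-x) * jap (m - n) ^ (-y)) :=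
    Summable.of_nonneg_of_le (fun n => mul_nonneg (Real.rpow_pos_of_pos (jap_pos n) _).le
      (Real.rpow_pos_of_pos (jap_pos _) _).le) hkey hGsum
  calc ∑' n : ℤ, jap n ^ (-x) * jap (m - n) ^ (-y)
      ≤ ∑' n : ℤ, 2 ^ r * jap m ^ (-r) * (jap n ^ (-s) + jap (m - n) ^ (-s)) :=
        Summable.tsum_le_tsum hkey hFsum hGsum
    _ = 2 ^ r * jap m ^ (-r) * (T + T) := by
        rw [tsum_mul_left, Summable.tsum_add hg hh, hhT]
    _ = 2 ^ r * (2 * T) * jap m ^ (-r) := by ring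
end

section
/- Let s > 1/2. There is a constant C > 0, depending only on s, such that for all integers N > M ≥ 1: Σ_{(n₁,n₂,n₃)∈A_{N,M}} |n₁|^{2s}|n₂|^{2s} n₃² / ( |n₁|^{2s+1}|n₂|^{2s+1}|n₃|^{2s+1} ) ≤ C·M^{−(s−1/2)} if 1/2 < s ≤ 3/2, and ≤ C·M^{−1} if s > 3/2. -/
open Finset Real


lemma key_step {p : ℝ} (hp : 1 < p) {n : ℕ} (hn : 1 ≤ n) :
    (p - 1) * ((n : ℝ) + 1) ^ (-p) ≤ (n : ℝ) ^ (1 - p) - ((n : ℝ) + 1) ^ (1 - p) := by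
  have hn0 : (0:ℝ) < n := by exact_mod_cast hn
  have hn1 : (0:ℝ) < (n:ℝ) + 1 := by linarith
  set q : ℝ := p - 1 with hq
  have hq0 : 0 < q := by simp only [hq]; linarith
  have claim : 1 + q / ((n:ℝ)+1) ≤ (1 + 1/(n:ℝ)) ^ q := by
    rcases le_or_gt 1 q with h1 | h1
    · have h := one_add_mul_self_le_rpow_one_add (s := 1/(n:ℝ)) (le_trans (by norm_num : (-1:ℝ) ≤ 0) (by positivity)) h1
      have h2 : q / ((n:ℝ)+1) ≤ q * (1/(n:ℝ)) := by
        rw [div_le_iff₀ hn1, mul_one_div, div_mul_eq_mul_div, le_div_iff₀ hn0]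
        nlinarith
      linarith
    · have hb : (1 - 1/((n:ℝ)+1)) ^ q ≤ 1 - q/((n:ℝ)+1) := by
        have h := rpow_one_add_le_one_add_mul_self (s := -(1/((n:ℝ)+1))) (by
          have : 1/((n:ℝ)+1) ≤ 1 := by rw [div_le_one hn1]; linarith
          linarith) hq0.le h1.le
        simpa [sub_eq_add_neg, mul_neg, div_eq_mul_inv] using h
      have hnb : (0:ℝ) < 1 - 1/((n:ℝ)+1) := by
        have : 1/((n:ℝ)+1) < 1 := by rw [div_lt_one hn1]; linarith
        linarith
      have hq1 : (0:ℝ) < 1 - q/((n:ℝ)+1) := by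
        have : q/((n:ℝ)+1) < 1 := by rw [div_lt_one hn1]; linarith
        linarith
      have hmul : (1 + 1/(n:ℝ)) * (1 - 1/((n:ℝ)+1)) = 1 := by field_simp; ring
      have hrm : (1 + 1/(n:ℝ)) ^ q * (1 - 1/((n:ℝ)+1)) ^ q = 1 := by
        rw [← Real.mul_rpow (by positivity) hnb.le, hmul, Real.one_rpow]
      have hple : (0:ℝ) < (1 - 1/((n:ℝ)+1)) ^ q := Real.rpow_pos_of_pos hnb _
      have h3 : (1 + q/((n:ℝ)+1)) * (1 - 1/((n:ℝ)+1)) ^ q ≤ 1 := by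
        calc (1 + q/((n:ℝ)+1)) * (1 - 1/((n:ℝ)+1)) ^ q
            ≤ (1 + q/((n:ℝ)+1)) * (1 - q/((n:ℝ)+1)) :=
              mul_le_mul_of_nonneg_left hb (by positivity)
          _ = 1 - (q/((n:ℝ)+1))^2 := by ring
          _ ≤ 1 := by nlinarith [sq_nonneg (q/((n:ℝ)+1))]
      have := mul_le_mul_of_nonneg_right h3 (le_of_lt (Real.rpow_pos_of_pos (show (0:ℝ) < 1 + 1/(n:ℝ)  by positivity) q))
      rw [one_mul] at this
      calc 1 + q / ((n:ℝ)+1)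
          = (1 + q/((n:ℝ)+1)) * (1 - 1/((n:ℝ)+1)) ^ q * (1 + 1/(n:ℝ)) ^ q := by
            rw [mul_assoc, mul_comm ((1 - 1/((n:ℝ)+1)) ^ q), hrm, mul_one]
        _ ≤ (1 + 1/(n:ℝ)) ^ q := this
  have hid : (n:ℝ) ^ (1-p) = ((n:ℝ)+1) ^ (1-p) * (1 + 1/(n:ℝ)) ^ q := by
    have h1 : (1 + 1/(n:ℝ)) = ((n:ℝ)+1) / (n:ℝ) := by field_simp
    rw [h1, Real.div_rpow hn1.le hn0.le]
    rw [show (1:ℝ) - p = -q by simp only [hq]; ring]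
    rw [Real.rpow_neg hn1.le, Real.rpow_neg hn0.le]
    field_simp
  have hsplit : ((n:ℝ)+1) ^ (1-p) = ((n:ℝ)+1) * ((n:ℝ)+1) ^ (-p) := by
    rw [show (1:ℝ)-p = 1 + (-p) by ring, Real.rpow_add hn1, Real.rpow_one]
  have hpow : ((n:ℝ)+1) ^ (1-p) * (q / ((n:ℝ)+1)) = q * ((n:ℝ)+1) ^ (-p) := by
    rw [hsplit]; field_simp
  calc (p-1) * ((n:ℝ)+1)^(-p) = ((n:ℝ)+1) ^ (1-p) * (q / ((n:ℝ)+1)) := by rw [hpow, hq]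
    _ ≤ ((n:ℝ)+1) ^ (1-p) * ((1 + 1/(n:ℝ)) ^ q - 1) := by
        apply mul_le_mul_of_nonneg_left _ (Real.rpow_nonneg hn1.le _)
        linarith
    _ = (n:ℝ) ^ (1-p) - ((n:ℝ)+1) ^ (1-p) := by rw [hid]; ring


lemma tail_Ioc {p : ℝ} (hp : 1 < p) {M : ℕ} (hM : 1 ≤ M) (L : ℕ) (hL : M ≤ L) :
    ∑ n ∈ Finset.Ioc M L, (n:ℝ) ^ (-p) ≤ ((M:ℝ)^(1-p) - (L:ℝ)^(1-p))/(p-1) := by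
  induction L, hL using Nat.le_induction with
  | base => simp
  | succ L hML ih =>
    rw [Finset.sum_Ioc_succ_top hML]
    have hk := key_step hp (le_trans hM hML)
    have hL1 : ((L+1 : ℕ):ℝ) = (L:ℝ) + 1 := by push_cast; ring
    rw [hL1]
    have h2 : ((L:ℝ)+1) ^ (-p) ≤ ((L:ℝ)^(1-p) - ((L:ℝ)+1)^(1-p))/(p-1) := by
      rw [le_div_iff₀ (by linarith : (0:ℝ) < p - 1)]
      linarith [hk]
    calc ∑ n ∈ Finset.Ioc M L, (n:ℝ) ^ (-p) + ((L:ℝ)+1) ^ (-p)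
        ≤ ((M:ℝ)^(1-p) - (L:ℝ)^(1-p))/(p-1) + ((L:ℝ)^(1-p) - ((L:ℝ)+1)^(1-p))/(p-1) :=
          add_le_add ih h2
      _ = ((M:ℝ)^(1-p) - ((L:ℝ)+1)^(1-p))/(p-1) := by ring

lemma tail_nat {p : ℝ} (hp : 1 < p) {M : ℕ} (hM : 1 ≤ M) (T : Finset ℕ) :
    ∑ n ∈ T.filter (fun n => M < n), (n:ℝ) ^ (-p) ≤ (M:ℝ)^(1-p)/(p-1) := by
  set L := max M (T.sup id) with hL
  have hsub : T.filter (fun n => M < n) ⊆ Finset.Ioc M L := by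
    intro n hn
    rw [Finset.mem_filter] at hn
    rw [Finset.mem_Ioc]
    exact ⟨hn.2, le_max_of_le_right (Finset.le_sup (f := id) hn.1)⟩
  calc ∑ n ∈ T.filter (fun n => M < n), (n:ℝ) ^ (-p)
      ≤ ∑ n ∈ Finset.Ioc M L, (n:ℝ) ^ (-p) :=
        Finset.sum_le_sum_of_subset_of_nonneg hsub
          (fun i _ _ => Real.rpow_nonneg (Nat.cast_nonneg i) _)
    _ ≤ ((M:ℝ)^(1-p) - (L:ℝ)^(1-p))/(p-1) := tail_Ioc hp hM L (le_max_left _ _)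
    _ ≤ (M:ℝ)^(1-p)/(p-1) := by
        have hL0 := Real.rpow_nonneg (Nat.cast_nonneg L) (1-p)
        gcongr
        · linarith

lemma full_nat {p : ℝ} (hp : 1 < p) (T : Finset ℕ) :
    ∑ n ∈ T, (n:ℝ) ^ (-p) ≤ 1 + 1/(p-1) := by
  rw [← Finset.sum_filter_add_sum_filter_not T (fun n => 1 < n)]
  have h1 : ∑ n ∈ T.filter (fun n => ¬ 1 < n), (n:ℝ) ^ (-p) ≤ 1 := by
    have hsub : T.filter (fun n => ¬ 1 < n) ⊆ {0, 1} := by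
      intro n hn
      rw [Finset.mem_filter] at hn
      simp only [Finset.mem_insert, Finset.mem_singleton]
      omega
    calc ∑ n ∈ T.filter (fun n => ¬ 1 < n), (n:ℝ) ^ (-p)
        ≤ ∑ n ∈ ({0,1} : Finset ℕ), (n:ℝ) ^ (-p) :=
          Finset.sum_le_sum_of_subset_of_nonneg hsub
            (fun i _ _ => Real.rpow_nonneg (Nat.cast_nonneg i) _)
      _ = 1 := by
          rw [Finset.sum_pair (by norm_num)]
          norm_num
          exact Real.zero_rpow (by linarith)
  have h2 := tail_nat hp (le_refl 1) T
  have h3 : ((1:ℕ):ℝ)^(1-p)/(p-1) = 1/(p-1) := by norm_num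
  rw [h3] at h2
  linarith


lemma fiber_card (S : Finset ℤ) (b : ℕ) :
    (S.filter (fun k => k.natAbs = b)).card ≤ 2 := by
  have hsub : S.filter (fun k => k.natAbs = b) ⊆ {(b:ℤ), -(b:ℤ)} := by
    intro k hk
    rw [Finset.mem_filter] at hk
    rw [Finset.mem_insert, Finset.mem_singleton, ← hk.2]
    rcases Int.natAbs_eq k with h | h
    · exact Or.inl h
    · exact Or.inr h
  calc (S.filter (fun k => k.natAbs = b)).card ≤ ({(b:ℤ), -(b:ℤ)} : Finset ℤ).card :=
        Finset.card_le_card hsub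
    _ ≤ 2 := Finset.card_insert_le _ _ |>.trans (by simp)

lemma comp_bound {p : ℝ} (hp : 1 < p) (S : Finset ℤ) (B : ℝ)
    (hB : ∑ n ∈ S.image Int.natAbs, (n:ℝ) ^ (-p) ≤ B) :
    ∑ k ∈ S, ((k.natAbs : ℕ):ℝ) ^ (-p) ≤ 2 * B := by
  rw [Finset.sum_comp (fun (n:ℕ) => (n:ℝ)^(-p)) Int.natAbs]
  calc ∑ b ∈ S.image Int.natAbs, (S.filter (fun k => k.natAbs = b)).card • ((b:ℕ):ℝ)^(-p)
      ≤ ∑ b ∈ S.image Int.natAbs, 2 * ((b:ℕ):ℝ)^(-p) := by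
        apply Finset.sum_le_sum
        intro b _
        rw [nsmul_eq_mul]
        apply mul_le_mul_of_nonneg_right _ (Real.rpow_nonneg (Nat.cast_nonneg b) _)
        exact_mod_cast fiber_card S b
    _ = 2 * ∑ b ∈ S.image Int.natAbs, ((b:ℕ):ℝ)^(-p) := by rw [Finset.mul_sum]
    _ ≤ 2 * B := by linarith

lemma full_int {p : ℝ} (hp : 1 < p) (S : Finset ℤ) :
    ∑ k ∈ S, ((k.natAbs : ℕ):ℝ) ^ (-p) ≤ 2 * (1 + 1/(p-1)) :=
  comp_bound hp S _ (full_nat hp _)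

lemma tail_int {p : ℝ} (hp : 1 < p) {M : ℕ} (hM : 1 ≤ M) (S : Finset ℤ) :
    ∑ k ∈ S.filter (fun k => (M:ℤ) < |k|), ((k.natAbs : ℕ):ℝ) ^ (-p)
      ≤ 2 * ((M:ℝ)^(1-p)/(p-1)) := by
  apply comp_bound hp _ _
  set T := (S.filter (fun k => (M:ℤ) < |k|)).image Int.natAbs with hT
  have h1 : T = T.filter (fun n => M < n) := by
    symm
    apply Finset.filter_true_of_mem
    intro n hn
    rw [hT, Finset.mem_image] at hn
    obtain ⟨k, hk, rfl⟩ := hn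
    rw [Finset.mem_filter] at hk
    have h2 := hk.2
    rw [Int.abs_eq_natAbs] at h2
    omega
  rw [h1]
  exact tail_nat hp hM T


lemma half_rpow {x : ℝ} (hx : 0 < x) (t : ℝ) : (x/2)^t = 2^(-t) * x^t := by
  rw [Real.div_rpow hx.le (by norm_num), Real.rpow_neg (by norm_num : (0:ℝ) ≤ 2)]
  rw [div_eq_mul_inv, mul_comm]

lemma real_pointwise {b δ x y z : ℝ} (hδ : 0 < δ) (hδb : δ ≤ b) (hb : b ≤ 1+δ)
    (hx : 1 ≤ x) (hy : 1 ≤ y) (hz : 1 ≤ z) (htri : x ≤ y + z) :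
    y^(-(1:ℝ)) * z^(-b) ≤ 2^(b-δ) * x^(δ-b) * (y^(-(1+δ)) + z^(-(1+δ))) := by
  have hx0 : (0:ℝ) < x := by linarith
  have hy0 : (0:ℝ) < y := by linarith
  have hz0 : (0:ℝ) < z := by linarith
  have hA : (0:ℝ) < x/2 := by linarith
  have hyp := Real.rpow_nonneg hy0.le (-(1+δ))
  have hzp := Real.rpow_nonneg hz0.le (-(1+δ))
  have hfac : (x/2)^(δ-b) = 2^(b-δ) * x^(δ-b) := by
    rw [half_rpow hx0, neg_sub]
  have key1 : ∀ u : ℝ, 0 < u → x/2 ≤ u → ∀ c : ℝ, 0 ≤ c → u^(-c) ≤ (x/2)^(-c) :=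
    fun u hu hu2 c hc => Real.rpow_le_rpow_of_nonpos hA hu2 (by linarith)
  rcases le_or_gt (2*y) x with ha | ha
  · -- y small, z ≥ x/2
    have hz2 : x/2 ≤ z := by linarith
    have e1 : y^(-(1:ℝ)) = y^δ * y^(-(1+δ)) := by
      rw [← Real.rpow_add hy0]; ring_nf
    have b1 : y^δ ≤ (x/2)^δ := Real.rpow_le_rpow hy0.le (by linarith) hδ.le
    have b2 : z^(-b) ≤ (x/2)^(-b) := key1 z hz0 hz2 b (by linarith)
    calc y^(-(1:ℝ)) * z^(-b) = (y^δ * z^(-b)) * y^(-(1+δ)) := by rw [e1]; ring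
      _ ≤ ((x/2)^δ * (x/2)^(-b)) * y^(-(1+δ)) := by
          apply mul_le_mul_of_nonneg_right _ hyp
          exact mul_le_mul b1 b2 (Real.rpow_nonneg hz0.le _) (Real.rpow_nonneg hA.le _)
      _ = (x/2)^(δ-b) * y^(-(1+δ)) := by rw [← Real.rpow_add hA]; ring_nf
      _ ≤ 2^(b-δ) * x^(δ-b) * (y^(-(1+δ)) + z^(-(1+δ))) := by
          rw [hfac]; nlinarith [Real.rpow_nonneg hx0.le (δ-b), Real.rpow_nonneg (show (0:ℝ) ≤ 2 by norm_num) (b-δ), mul_nonneg (Real.rpow_nonneg (show (0:ℝ) ≤ 2 by norm_num) (b-δ)) (Real.rpow_nonneg hx0.le (δ-b))]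
  · rcases le_or_gt (2*z) x with hb2 | hb2
    · -- z small, y ≥ x/2
      have hy2 : x/2 ≤ y := by linarith
      have e1 : z^(-b) = z^(1+δ-b) * z^(-(1+δ)) := by
        rw [← Real.rpow_add hz0]; ring_nf
      have b1 : z^(1+δ-b) ≤ (x/2)^(1+δ-b) := Real.rpow_le_rpow hz0.le (by linarith) (by linarith)
      have b2 : y^(-(1:ℝ)) ≤ (x/2)^(-(1:ℝ)) := key1 y hy0 hy2 1 (by norm_num)
      calc y^(-(1:ℝ)) * z^(-b) = (y^(-(1:ℝ)) * z^(1+δ-b)) * z^(-(1+δ)) := by rw [e1]; ring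
        _ ≤ ((x/2)^(-(1:ℝ)) * (x/2)^(1+δ-b)) * z^(-(1+δ)) := by
            apply mul_le_mul_of_nonneg_right _ hzp
            exact mul_le_mul b2 b1 (Real.rpow_nonneg hz0.le _) (Real.rpow_nonneg hA.le _)
        _ = (x/2)^(δ-b) * z^(-(1+δ)) := by rw [← Real.rpow_add hA]; ring_nf
        _ ≤ 2^(b-δ) * x^(δ-b) * (y^(-(1+δ)) + z^(-(1+δ))) := by
            rw [hfac]; nlinarith [mul_nonneg (Real.rpow_nonneg (show (0:ℝ) ≤ 2 by norm_num) (b-δ)) (Real.rpow_nonneg hx0.le (δ-b))]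
    · -- both ≥ x/2
      rcases le_total y z with hyz | hyz
      · have e1 : z^(-b) = z^(-δ) * z^(-(b-δ)) := by
          rw [← Real.rpow_add hz0]; ring_nf
        have b1 : z^(-δ) ≤ y^(-δ) := Real.rpow_le_rpow_of_nonpos hy0 hyz (by linarith)
        have b2 : z^(-(b-δ)) ≤ (x/2)^(-(b-δ)) := key1 z hz0 (by linarith) (b-δ) (by linarith)
        have e2 : y^(-(1:ℝ)) * y^(-δ) = y^(-(1+δ)) := by
          rw [← Real.rpow_add hy0]; ring_nf
        calc y^(-(1:ℝ)) * z^(-b) = (y^(-(1:ℝ)) * z^(-δ)) * z^(-(b-δ)) := by rw [e1]; ring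
          _ ≤ (y^(-(1:ℝ)) * y^(-δ)) * (x/2)^(-(b-δ)) := by
              apply mul_le_mul _ b2 (Real.rpow_nonneg hz0.le _) _
              · exact mul_le_mul_of_nonneg_left b1 (Real.rpow_nonneg hy0.le _)
              · exact mul_nonneg (Real.rpow_nonneg hy0.le _) (Real.rpow_nonneg hy0.le _)
          _ = (x/2)^(δ-b) * y^(-(1+δ)) := by rw [e2, neg_sub]; ring
          _ ≤ 2^(b-δ) * x^(δ-b) * (y^(-(1+δ)) + z^(-(1+δ))) := by
              rw [hfac]; nlinarith [mul_nonneg (Real.rpow_nonneg (show (0:ℝ) ≤ 2 by norm_num) (b-δ)) (Real.rpow_nonneg hx0.le (δ-b))]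
      · have e1 : y^(-(1:ℝ)) = y^(-(1+δ-b)) * y^(-(b-δ)) := by
          rw [← Real.rpow_add hy0]; ring_nf
        have b1 : y^(-(1+δ-b)) ≤ z^(-(1+δ-b)) := Real.rpow_le_rpow_of_nonpos hz0 hyz (by linarith)
        have b2 : y^(-(b-δ)) ≤ (x/2)^(-(b-δ)) := key1 y hy0 (by linarith) (b-δ) (by linarith)
        have e2 : z^(-(1+δ-b)) * z^(-b) = z^(-(1+δ)) := by
          rw [← Real.rpow_add hz0]; ring_nf
        calc y^(-(1:ℝ)) * z^(-b) = (y^(-(1+δ-b)) * y^(-(b-δ))) * z^(-b) := by rw [e1]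
          _ ≤ (z^(-(1+δ-b)) * (x/2)^(-(b-δ))) * z^(-b) := by
              apply mul_le_mul_of_nonneg_right _ (Real.rpow_nonneg hz0.le _)
              exact mul_le_mul b1 b2 (Real.rpow_nonneg hy0.le _) (Real.rpow_nonneg hz0.le _)
          _ = (x/2)^(δ-b) * z^(-(1+δ)) := by rw [mul_right_comm, e2, neg_sub]; ring
          _ ≤ 2^(b-δ) * x^(δ-b) * (y^(-(1+δ)) + z^(-(1+δ))) := by
              rw [hfac]; nlinarith [mul_nonneg (Real.rpow_nonneg (show (0:ℝ) ≤ 2 by norm_num) (b-δ)) (Real.rpow_nonneg hx0.le (δ-b))]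


lemma int_pointwise {b δ : ℝ} (hδ : 0 < δ) (hδb : δ ≤ b) (hb : b ≤ 1+δ)
    {k : ℤ} (hk : 1 ≤ k.natAbs) (m : ℤ) :
    ((m.natAbs:ℕ):ℝ)^(-(1:ℝ)) * (((k+m).natAbs:ℕ):ℝ)^(-b)
      ≤ 2^(b-δ) * ((k.natAbs:ℕ):ℝ)^(δ-b)
        * (((m.natAbs:ℕ):ℝ)^(-(1+δ)) + (((k+m).natAbs:ℕ):ℝ)^(-(1+δ))) := by
  have hRnn : 0 ≤ 2^(b-δ) * ((k.natAbs:ℕ):ℝ)^(δ-b)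
      * (((m.natAbs:ℕ):ℝ)^(-(1+δ)) + (((k+m).natAbs:ℕ):ℝ)^(-(1+δ))) := by
    apply mul_nonneg (mul_nonneg (Real.rpow_nonneg (by norm_num) _) (Real.rpow_nonneg (Nat.cast_nonneg _) _))
    exact add_nonneg (Real.rpow_nonneg (Nat.cast_nonneg _) _) (Real.rpow_nonneg (Nat.cast_nonneg _) _)
  rcases Nat.eq_zero_or_pos m.natAbs with hm | hm
  · rw [hm]
    simp only [Nat.cast_zero]
    rw [Real.zero_rpow (by norm_num : -(1:ℝ) ≠ 0), zero_mul]
    positivity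
  rcases Nat.eq_zero_or_pos (k+m).natAbs with hkm | hkm
  · rw [hkm]
    simp only [Nat.cast_zero]
    rw [Real.zero_rpow (show -b ≠ 0 by intro h; rw [neg_eq_zero] at h; linarith), mul_zero]
    positivity
  apply real_pointwise hδ hδb hb
  · exact_mod_cast hk
  · exact_mod_cast hm
  · exact_mod_cast hkm
  · have : k.natAbs ≤ m.natAbs + (k+m).natAbs := by
      have h := Int.natAbs_add_le (k+m) (-m)
      simp only [add_neg_cancel_right, Int.natAbs_neg] at h
      omega
    exact_mod_cast this

lemma conv {b δ : ℝ} (hδ : 0 < δ) (hδb : δ ≤ b) (hb : b ≤ 1+δ)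
    {k : ℤ} (hk : 1 ≤ k.natAbs) (S : Finset ℤ) :
    ∑ m ∈ S, ((m.natAbs:ℕ):ℝ)^(-(1:ℝ)) * (((k+m).natAbs:ℕ):ℝ)^(-b)
      ≤ (8*(1+1/δ)) * ((k.natAbs:ℕ):ℝ)^(δ-b) := by
  have hδ1 : (1:ℝ) < 1 + δ := by linarith
  have h1 : ∑ m ∈ S, ((m.natAbs:ℕ):ℝ)^(-(1+δ)) ≤ 2*(1+1/δ) := by
    have := full_int hδ1 S
    simpa using this
  have h2 : ∑ m ∈ S, (((k+m).natAbs:ℕ):ℝ)^(-(1+δ)) ≤ 2*(1+1/δ) := by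
    have hrw : ∑ m ∈ S, (((k+m).natAbs:ℕ):ℝ)^(-(1+δ))
        = ∑ j ∈ S.image (fun m => k + m), ((j.natAbs:ℕ):ℝ)^(-(1+δ)) := by
      rw [Finset.sum_image (fun x _ y _ h => by omega)]
    rw [hrw]
    have := full_int hδ1 (S.image (fun m => k + m))
    simpa using this
  have h3 : ∀ m ∈ S, ((m.natAbs:ℕ):ℝ)^(-(1:ℝ)) * (((k+m).natAbs:ℕ):ℝ)^(-b)
      ≤ 2^(b-δ) * ((k.natAbs:ℕ):ℝ)^(δ-b)
        * (((m.natAbs:ℕ):ℝ)^(-(1+δ)) + (((k+m).natAbs:ℕ):ℝ)^(-(1+δ))) :=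
    fun m _ => int_pointwise hδ hδb hb hk m
  calc ∑ m ∈ S, ((m.natAbs:ℕ):ℝ)^(-(1:ℝ)) * (((k+m).natAbs:ℕ):ℝ)^(-b)
      ≤ ∑ m ∈ S, 2^(b-δ) * ((k.natAbs:ℕ):ℝ)^(δ-b)
        * (((m.natAbs:ℕ):ℝ)^(-(1+δ)) + (((k+m).natAbs:ℕ):ℝ)^(-(1+δ))) :=
        Finset.sum_le_sum h3
    _ = 2^(b-δ) * ((k.natAbs:ℕ):ℝ)^(δ-b)
        * ((∑ m ∈ S, ((m.natAbs:ℕ):ℝ)^(-(1+δ))) + ∑ m ∈ S, (((k+m).natAbs:ℕ):ℝ)^(-(1+δ))) := by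
        rw [← Finset.mul_sum, Finset.sum_add_distrib]
    _ ≤ 2^(b-δ) * ((k.natAbs:ℕ):ℝ)^(δ-b) * (2*(1+1/δ) + 2*(1+1/δ)) := by
        apply mul_le_mul_of_nonneg_left (add_le_add h1 h2)
        exact mul_nonneg (Real.rpow_nonneg (by norm_num) _) (Real.rpow_nonneg (Nat.cast_nonneg _) _)
    _ ≤ (8*(1+1/δ)) * ((k.natAbs:ℕ):ℝ)^(δ-b) := by
        have h2b : (2:ℝ)^(b-δ) ≤ 2 := by
          calc (2:ℝ)^(b-δ) ≤ (2:ℝ)^(1:ℝ) := Real.rpow_le_rpow_of_exponent_le (by norm_num) (by linarith)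
            _ = 2 := Real.rpow_one 2
        have hxp := Real.rpow_nonneg (Nat.cast_nonneg k.natAbs) (δ-b)
        have h1δ : (0:ℝ) < 1 + 1/δ := by positivity
        have key : 0 ≤ (2 - 2^(b-δ)) * (((k.natAbs:ℕ):ℝ)^(δ-b) * (4*(1+1/δ))) :=
          mul_nonneg (by linarith) (by positivity)
        nlinarith [key]


lemma part_bound (N M : ℕ) (hM : 1 ≤ M) {e b δ : ℝ} (hδ : 0 < δ) (hδb : δ ≤ b)
    (hb : b ≤ 1+δ) (he : e + (δ - b) = -(1+δ)) :
    ∑ q ∈ ((Finset.Icc (-(N:ℤ)) N).filter (fun k => (M:ℤ) < |k|)) ×ˢ (Finset.Icc (-(N:ℤ)) N),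
        ((q.1.natAbs:ℕ):ℝ)^e * (((q.2.natAbs:ℕ):ℝ)^(-(1:ℝ)) * ((((q.1+q.2).natAbs:ℕ)):ℝ)^(-b))
      ≤ (8*(1+1/δ)) * (2*((M:ℝ)^(-δ)/δ)) := by
  rw [Finset.sum_product]
  have hCin : (0:ℝ) ≤ 8*(1+1/δ) := by positivity
  have hk1 : ∀ k ∈ (Finset.Icc (-(N:ℤ)) N).filter (fun k => (M:ℤ) < |k|), 1 ≤ k.natAbs := by
    intro k hk
    rw [Finset.mem_filter] at hk
    have h2 := hk.2
    rw [Int.abs_eq_natAbs] at h2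
    omega
  calc ∑ k ∈ (Finset.Icc (-(N:ℤ)) N).filter (fun k => (M:ℤ) < |k|),
        ∑ m ∈ Finset.Icc (-(N:ℤ)) N,
          ((k.natAbs:ℕ):ℝ)^e * (((m.natAbs:ℕ):ℝ)^(-(1:ℝ)) * ((((k+m).natAbs:ℕ)):ℝ)^(-b))
      ≤ ∑ k ∈ (Finset.Icc (-(N:ℤ)) N).filter (fun k => (M:ℤ) < |k|),
          ((k.natAbs:ℕ):ℝ)^e * ((8*(1+1/δ)) * ((k.natAbs:ℕ):ℝ)^(δ-b)) := by
        apply Finset.sum_le_sum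
        intro k hk
        rw [← Finset.mul_sum]
        exact mul_le_mul_of_nonneg_left (conv hδ hδb hb (hk1 k hk) _)
          (Real.rpow_nonneg (Nat.cast_nonneg _) _)
    _ = (8*(1+1/δ)) * ∑ k ∈ (Finset.Icc (-(N:ℤ)) N).filter (fun k => (M:ℤ) < |k|),
          ((k.natAbs:ℕ):ℝ)^(-(1+δ)) := by
        rw [Finset.mul_sum]
        apply Finset.sum_congr rfl
        intro k hk
        have h1 : (0:ℝ) < ((k.natAbs:ℕ):ℝ) := by
          have := hk1 k hk; exact_mod_cast this
        rw [← he, Real.rpow_add h1]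
        ring
    _ ≤ (8*(1+1/δ)) * (2*((M:ℝ)^(-δ)/δ)) := by
        apply mul_le_mul_of_nonneg_left _ hCin
        have ht := tail_int (p := 1+δ) (by linarith) hM (Finset.Icc (-(N:ℤ)) N)
        have e1 : (1:ℝ)-(1+δ) = -δ := by ring
        have e2 : (1+δ)-1 = δ := by ring
        rw [e1, e2] at ht
        exact ht


/-- The index set `A_{N,M}` of triples of nonzero integers summing to zero with
`M < max |n_i| ≤ N`. -/
noncomputable def ANM (N M : ℕ) : Finset (ℤ × ℤ × ℤ) :=
  ((Finset.Icc (-(N : ℤ)) N ×ˢ Finset.Icc (-(N : ℤ)) N ×ˢ Finset.Icc (-(N : ℤ)) N).filter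
    fun p => p.1 ≠ 0 ∧ p.2.1 ≠ 0 ∧ p.2.2 ≠ 0 ∧ p.1 + p.2.1 + p.2.2 = 0 ∧
      (M : ℤ) < max |p.1| (max |p.2.1| |p.2.2|))

/-- Estimate on the Wick sum with weight `|n₁|^{2s}|n₂|^{2s}n₃²`. -/
theorem statement9 (s : ℝ) (hs : 1 / 2 < s) :
    ∃ C > 0, ∀ N M : ℕ, 1 ≤ M → M < N →
      ((s ≤ 3 / 2 →
        ∑ p ∈ ANM N M,
            |(p.1 : ℝ)| ^ (2 * s) * |(p.2.1 : ℝ)| ^ (2 * s) * (p.2.2 : ℝ) ^ 2 /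
              (|(p.1 : ℝ)| ^ (2 * s + 1) * |(p.2.1 : ℝ)| ^ (2 * s + 1) *
                |(p.2.2 : ℝ)| ^ (2 * s + 1))
          ≤ C * (M : ℝ) ^ (-(s - 1 / 2))) ∧
      (3 / 2 < s →
        ∑ p ∈ ANM N M,
            |(p.1 : ℝ)| ^ (2 * s) * |(p.2.1 : ℝ)| ^ (2 * s) * (p.2.2 : ℝ) ^ 2 /
              (|(p.1 : ℝ)| ^ (2 * s + 1) * |(p.2.1 : ℝ)| ^ (2 * s + 1) *
                |(p.2.2 : ℝ)| ^ (2 * s + 1))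
          ≤ C * (M : ℝ) ^ (-(1 : ℝ)))) := by
  set θ : ℝ := min (s - 1/2) 1 with hθdef
  have hθ0 : 0 < θ := lt_min (by linarith) one_pos
  have hθ1 : θ ≤ 1 := min_le_right _ _
  have hθs : θ ≤ s - 1/2 := min_le_left _ _
  refine ⟨3 * ((8*(1+1/θ)) * (2*(1/θ))), by positivity, ?_⟩
  intro N M hM hMN
  -- main estimate
  have main : ∑ p ∈ ANM N M,
      |(p.1 : ℝ)| ^ (2 * s) * |(p.2.1 : ℝ)| ^ (2 * s) * (p.2.2 : ℝ) ^ 2 /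
        (|(p.1 : ℝ)| ^ (2 * s + 1) * |(p.2.1 : ℝ)| ^ (2 * s + 1) *
          |(p.2.2 : ℝ)| ^ (2 * s + 1))
      ≤ 3 * ((8*(1+1/θ)) * (2*(1/θ))) * (M:ℝ)^(-θ) := by
    set I : Finset ℤ := Finset.Icc (-(N:ℤ)) N with hI
    set F : ℤ × ℤ × ℤ → ℝ := fun p =>
      ((p.1.natAbs:ℕ):ℝ)^(-(1:ℝ)) * (((p.2.1.natAbs:ℕ):ℝ)^(-(1:ℝ)) * ((p.2.2.natAbs:ℕ):ℝ)^(-(2*θ))) with hF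
    have hFnn : ∀ p, 0 ≤ F p := by
      intro p; rw [hF]; positivity
    have hmem : ∀ p ∈ ANM N M, (p.1 ∈ I ∧ p.2.1 ∈ I ∧ p.2.2 ∈ I) ∧
        p.1 ≠ 0 ∧ p.2.1 ≠ 0 ∧ p.2.2 ≠ 0 ∧ p.1 + p.2.1 + p.2.2 = 0 ∧
        (M : ℤ) < max |p.1| (max |p.2.1| |p.2.2|) := by
      intro p hp
      simp only [ANM, Finset.mem_filter, Finset.mem_product] at hp
      exact ⟨⟨hp.1.1, hp.1.2.1, hp.1.2.2⟩, hp.2⟩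
    -- Step 1a: pointwise bound
    have step1 : ∀ p ∈ ANM N M,
        |(p.1 : ℝ)| ^ (2 * s) * |(p.2.1 : ℝ)| ^ (2 * s) * (p.2.2 : ℝ) ^ 2 /
          (|(p.1 : ℝ)| ^ (2 * s + 1) * |(p.2.1 : ℝ)| ^ (2 * s + 1) *
            |(p.2.2 : ℝ)| ^ (2 * s + 1)) ≤ F p := by
      intro p hp
      obtain ⟨-, h1, h2, h3, -, -⟩ := hmem p hp
      have e1 : |((p.1:ℝ))| = ((p.1.natAbs:ℕ):ℝ) := by
        rw [Nat.cast_natAbs]; exact Int.cast_abs.symm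
      have e2 : |((p.2.1:ℝ))| = ((p.2.1.natAbs:ℕ):ℝ) := by
        rw [Nat.cast_natAbs]; exact Int.cast_abs.symm
      have e3 : |((p.2.2:ℝ))| = ((p.2.2.natAbs:ℕ):ℝ) := by
        rw [Nat.cast_natAbs]; exact Int.cast_abs.symm
      set x1 : ℝ := ((p.1.natAbs:ℕ):ℝ)
      set x2 : ℝ := ((p.2.1.natAbs:ℕ):ℝ)
      set x3 : ℝ := ((p.2.2.natAbs:ℕ):ℝ)
      have hx1 : 1 ≤ x1 := Nat.one_le_cast.mpr (by omega)
      have hx2 : 1 ≤ x2 := Nat.one_le_cast.mpr (by omega)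
      have hx3 : 1 ≤ x3 := Nat.one_le_cast.mpr (by omega)
      have hx10 : (0:ℝ) < x1 := by linarith
      have hx20 : (0:ℝ) < x2 := by linarith
      have hx30 : (0:ℝ) < x3 := by linarith
      have hsq : ((p.2.2:ℝ))^2 = x3 ^ ((2:ℕ):ℝ) := by
        rw [Real.rpow_natCast, ← e3, sq_abs]
      rw [e1, e2, e3, hsq]
      have heq : x1 ^ (2*s) * x2 ^ (2*s) * x3 ^ ((2:ℕ):ℝ) /
          (x1 ^ (2*s+1) * x2 ^ (2*s+1) * x3 ^ (2*s+1))
          = x1^(-(1:ℝ)) * (x2^(-(1:ℝ)) * x3^(((2:ℕ):ℝ)-(2*s+1))) := by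
        have d1 : x1^(2*s+1) ≠ 0 := (Real.rpow_pos_of_pos hx10 _).ne'
        have d2 : x2^(2*s+1) ≠ 0 := (Real.rpow_pos_of_pos hx20 _).ne'
        have d3 : x3^(2*s+1) ≠ 0 := (Real.rpow_pos_of_pos hx30 _).ne'
        rw [show (-(1:ℝ)) = 2*s - (2*s+1) by ring]
        rw [Real.rpow_sub hx10, Real.rpow_sub hx20, Real.rpow_sub hx30]
        field_simp
      rw [heq]
      rw [hF]
      apply mul_le_mul_of_nonneg_left _ (Real.rpow_nonneg hx10.le _)
      apply mul_le_mul_of_nonneg_left _ (Real.rpow_nonneg hx20.le _)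
      apply Real.rpow_le_rpow_of_exponent_le hx3
      push_cast
      linarith
    -- Step 1b : split into three parts
    have step2 : ∑ p ∈ ANM N M, F p ≤
        (∑ p ∈ (ANM N M).filter (fun p => (M:ℤ) < |p.1|), F p)
        + ((∑ p ∈ (ANM N M).filter (fun p => (M:ℤ) < |p.2.1|), F p)
          + (∑ p ∈ (ANM N M).filter (fun p => (M:ℤ) < |p.2.2|), F p)) := by
      rw [Finset.sum_filter, Finset.sum_filter, Finset.sum_filter,
        ← Finset.sum_add_distrib, ← Finset.sum_add_distrib]
      apply Finset.sum_le_sum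
      intro p hp
      obtain ⟨-, -, -, -, -, hmax⟩ := hmem p hp
      rcases lt_max_iff.mp hmax with h | h
      · rw [if_pos h]
        have := hFnn p
        split_ifs <;> linarith
      rcases lt_max_iff.mp h with h | h
      · rw [if_pos h]
        have := hFnn p
        split_ifs <;> linarith
      · rw [if_pos h]
        have := hFnn p
        split_ifs <;> linarith
    -- the target product set
    set T : Finset (ℤ × ℤ) := (I.filter (fun k => (M:ℤ) < |k|)) ×ˢ I with hT
    -- part 1
    have part1 : ∑ p ∈ (ANM N M).filter (fun p => (M:ℤ) < |p.1|), F p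
        ≤ (8*(1+1/θ)) * (2*((M:ℝ)^(-θ)/θ)) := by
      set G : ℤ × ℤ → ℝ := fun q =>
        ((q.1.natAbs:ℕ):ℝ)^(-(1:ℝ)) * (((q.2.natAbs:ℕ):ℝ)^(-(1:ℝ)) * ((((q.1+q.2).natAbs:ℕ)):ℝ)^(-(2*θ))) with hG
      have hGnn : ∀ q : ℤ × ℤ, 0 ≤ G q := by intro q; rw [hG]; positivity
      have hcong : ∀ p ∈ (ANM N M).filter (fun p => (M:ℤ) < |p.1|), F p = G (p.1, p.2.1) := by
        intro p hp
        rw [Finset.mem_filter] at hp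
        obtain ⟨-, -, -, -, hsum, -⟩ := hmem p hp.1
        have h22 : p.2.2 = -(p.1 + p.2.1) := by omega
        simp only [hF, hG, h22, Int.natAbs_neg]
      rw [Finset.sum_congr rfl hcong]
      have hinj : ∀ x ∈ (ANM N M).filter (fun p => (M:ℤ) < |p.1|),
          ∀ y ∈ (ANM N M).filter (fun p => (M:ℤ) < |p.1|),
          (fun p : ℤ × ℤ × ℤ => (p.1, p.2.1)) x = (fun p : ℤ × ℤ × ℤ => (p.1, p.2.1)) y → x = y := by
        intro x hx y hy hxy
        rw [Finset.mem_filter] at hx hy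
        obtain ⟨-, -, -, -, hsx, -⟩ := hmem x hx.1
        obtain ⟨-, -, -, -, hsy, -⟩ := hmem y hy.1
        simp only [Prod.mk.injEq] at hxy
        have : x.2.2 = y.2.2 := by omega
        exact Prod.ext hxy.1 (Prod.ext hxy.2 this)
      rw [show ∑ p ∈ (ANM N M).filter (fun p => (M:ℤ) < |p.1|), G (p.1, p.2.1)
          = ∑ q ∈ ((ANM N M).filter (fun p => (M:ℤ) < |p.1|)).image
              (fun p : ℤ × ℤ × ℤ => (p.1, p.2.1)), G q from (Finset.sum_image hinj).symm]
      have hsub : ((ANM N M).filter (fun p => (M:ℤ) < |p.1|)).image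
          (fun p : ℤ × ℤ × ℤ => (p.1, p.2.1)) ⊆ T := by
        intro q hq
        rw [Finset.mem_image] at hq
        obtain ⟨p, hp, rfl⟩ := hq
        rw [Finset.mem_filter] at hp
        obtain ⟨⟨hi1, hi2, -⟩, -, -, -, -, -⟩ := hmem p hp.1
        rw [hT, Finset.mem_product, Finset.mem_filter]
        exact ⟨⟨hi1, hp.2⟩, hi2⟩
      calc ∑ q ∈ ((ANM N M).filter (fun p => (M:ℤ) < |p.1|)).image
            (fun p : ℤ × ℤ × ℤ => (p.1, p.2.1)), G q
          ≤ ∑ q ∈ T, G q :=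
            Finset.sum_le_sum_of_subset_of_nonneg hsub (fun q _ _ => hGnn q)
        _ ≤ (8*(1+1/θ)) * (2*((M:ℝ)^(-θ)/θ)) := by
            rw [hT, hG, hI]
            exact part_bound N M hM hθ0 (by linarith) (by linarith) (by ring)
    -- part 2
    have part2 : ∑ p ∈ (ANM N M).filter (fun p => (M:ℤ) < |p.2.1|), F p
        ≤ (8*(1+1/θ)) * (2*((M:ℝ)^(-θ)/θ)) := by
      set G : ℤ × ℤ → ℝ := fun q =>
        ((q.1.natAbs:ℕ):ℝ)^(-(1:ℝ)) * (((q.2.natAbs:ℕ):ℝ)^(-(1:ℝ)) * ((((q.1+q.2).natAbs:ℕ)):ℝ)^(-(2*θ))) with hG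
      have hGnn : ∀ q : ℤ × ℤ, 0 ≤ G q := by intro q; rw [hG]; positivity
      have hcong : ∀ p ∈ (ANM N M).filter (fun p => (M:ℤ) < |p.2.1|), F p = G (p.2.1, p.1) := by
        intro p hp
        rw [Finset.mem_filter] at hp
        obtain ⟨-, -, -, -, hsum, -⟩ := hmem p hp.1
        simp only [hF, hG]
        rw [show p.2.1 + p.1 = -p.2.2 by omega, Int.natAbs_neg]
        ring
      rw [Finset.sum_congr rfl hcong]
      have hinj : ∀ x ∈ (ANM N M).filter (fun p => (M:ℤ) < |p.2.1|),
          ∀ y ∈ (ANM N M).filter (fun p => (M:ℤ) < |p.2.1|),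
          (fun p : ℤ × ℤ × ℤ => (p.2.1, p.1)) x = (fun p : ℤ × ℤ × ℤ => (p.2.1, p.1)) y → x = y := by
        intro x hx y hy hxy
        rw [Finset.mem_filter] at hx hy
        obtain ⟨-, -, -, -, hsx, -⟩ := hmem x hx.1
        obtain ⟨-, -, -, -, hsy, -⟩ := hmem y hy.1
        simp only [Prod.mk.injEq] at hxy
        have : x.2.2 = y.2.2 := by omega
        exact Prod.ext hxy.2 (Prod.ext hxy.1 this)
      rw [show ∑ p ∈ (ANM N M).filter (fun p => (M:ℤ) < |p.2.1|), G (p.2.1, p.1)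
          = ∑ q ∈ ((ANM N M).filter (fun p => (M:ℤ) < |p.2.1|)).image
              (fun p : ℤ × ℤ × ℤ => (p.2.1, p.1)), G q from (Finset.sum_image hinj).symm]
      have hsub : ((ANM N M).filter (fun p => (M:ℤ) < |p.2.1|)).image
          (fun p : ℤ × ℤ × ℤ => (p.2.1, p.1)) ⊆ T := by
        intro q hq
        rw [Finset.mem_image] at hq
        obtain ⟨p, hp, rfl⟩ := hq
        rw [Finset.mem_filter] at hp
        obtain ⟨⟨hi1, hi2, -⟩, -, -, -, -, -⟩ := hmem p hp.1
        rw [hT, Finset.mem_product, Finset.mem_filter]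
        exact ⟨⟨hi2, hp.2⟩, hi1⟩
      calc ∑ q ∈ ((ANM N M).filter (fun p => (M:ℤ) < |p.2.1|)).image
            (fun p : ℤ × ℤ × ℤ => (p.2.1, p.1)), G q
          ≤ ∑ q ∈ T, G q :=
            Finset.sum_le_sum_of_subset_of_nonneg hsub (fun q _ _ => hGnn q)
        _ ≤ (8*(1+1/θ)) * (2*((M:ℝ)^(-θ)/θ)) := by
            rw [hT, hG, hI]
            exact part_bound N M hM hθ0 (by linarith) (by linarith) (by ring)
    -- part 3
    have part3 : ∑ p ∈ (ANM N M).filter (fun p => (M:ℤ) < |p.2.2|), F p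
        ≤ (8*(1+1/θ)) * (2*((M:ℝ)^(-θ)/θ)) := by
      set G : ℤ × ℤ → ℝ := fun q =>
        ((q.1.natAbs:ℕ):ℝ)^(-(2*θ)) * (((q.2.natAbs:ℕ):ℝ)^(-(1:ℝ)) * ((((q.1+q.2).natAbs:ℕ)):ℝ)^(-(1:ℝ))) with hG
      have hGnn : ∀ q : ℤ × ℤ, 0 ≤ G q := by intro q; rw [hG]; positivity
      have hcong : ∀ p ∈ (ANM N M).filter (fun p => (M:ℤ) < |p.2.2|), F p = G (p.2.2, p.1) := by
        intro p hp
        rw [Finset.mem_filter] at hp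
        obtain ⟨-, -, -, -, hsum, -⟩ := hmem p hp.1
        simp only [hF, hG]
        rw [show p.2.2 + p.1 = -p.2.1 by omega, Int.natAbs_neg]
        ring
      rw [Finset.sum_congr rfl hcong]
      have hinj : ∀ x ∈ (ANM N M).filter (fun p => (M:ℤ) < |p.2.2|),
          ∀ y ∈ (ANM N M).filter (fun p => (M:ℤ) < |p.2.2|),
          (fun p : ℤ × ℤ × ℤ => (p.2.2, p.1)) x = (fun p : ℤ × ℤ × ℤ => (p.2.2, p.1)) y → x = y := by
        intro x hx y hy hxy
        rw [Finset.mem_filter] at hx hy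
        obtain ⟨-, -, -, -, hsx, -⟩ := hmem x hx.1
        obtain ⟨-, -, -, -, hsy, -⟩ := hmem y hy.1
        simp only [Prod.mk.injEq] at hxy
        have : x.2.1 = y.2.1 := by omega
        exact Prod.ext hxy.2 (Prod.ext this hxy.1)
      rw [show ∑ p ∈ (ANM N M).filter (fun p => (M:ℤ) < |p.2.2|), G (p.2.2, p.1)
          = ∑ q ∈ ((ANM N M).filter (fun p => (M:ℤ) < |p.2.2|)).image
              (fun p : ℤ × ℤ × ℤ => (p.2.2, p.1)), G q from (Finset.sum_image hinj).symm]
      have hsub : ((ANM N M).filter (fun p => (M:ℤ) < |p.2.2|)).image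
          (fun p : ℤ × ℤ × ℤ => (p.2.2, p.1)) ⊆ T := by
        intro q hq
        rw [Finset.mem_image] at hq
        obtain ⟨p, hp, rfl⟩ := hq
        rw [Finset.mem_filter] at hp
        obtain ⟨⟨hi1, -, hi3⟩, -, -, -, -, -⟩ := hmem p hp.1
        rw [hT, Finset.mem_product, Finset.mem_filter]
        exact ⟨⟨hi3, hp.2⟩, hi1⟩
      calc ∑ q ∈ ((ANM N M).filter (fun p => (M:ℤ) < |p.2.2|)).image
            (fun p : ℤ × ℤ × ℤ => (p.2.2, p.1)), G q
          ≤ ∑ q ∈ T, G q :=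
            Finset.sum_le_sum_of_subset_of_nonneg hsub (fun q _ _ => hGnn q)
        _ ≤ (8*(1+1/θ)) * (2*((M:ℝ)^(-θ)/θ)) := by
            rw [hT, hG, hI]
            exact part_bound N M hM hθ0 (by linarith) (by linarith) (by ring)
    calc ∑ p ∈ ANM N M,
        |(p.1 : ℝ)| ^ (2 * s) * |(p.2.1 : ℝ)| ^ (2 * s) * (p.2.2 : ℝ) ^ 2 /
          (|(p.1 : ℝ)| ^ (2 * s + 1) * |(p.2.1 : ℝ)| ^ (2 * s + 1) *
            |(p.2.2 : ℝ)| ^ (2 * s + 1))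
        ≤ ∑ p ∈ ANM N M, F p := Finset.sum_le_sum step1
      _ ≤ (∑ p ∈ (ANM N M).filter (fun p => (M:ℤ) < |p.1|), F p)
          + ((∑ p ∈ (ANM N M).filter (fun p => (M:ℤ) < |p.2.1|), F p)
            + (∑ p ∈ (ANM N M).filter (fun p => (M:ℤ) < |p.2.2|), F p)) := step2
      _ ≤ (8*(1+1/θ)) * (2*((M:ℝ)^(-θ)/θ))
          + ((8*(1+1/θ)) * (2*((M:ℝ)^(-θ)/θ)) + (8*(1+1/θ)) * (2*((M:ℝ)^(-θ)/θ))) :=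
          add_le_add part1 (add_le_add part2 part3)
      _ = 3 * ((8*(1+1/θ)) * (2*(1/θ))) * (M:ℝ)^(-θ) := by ring
  constructor
  · intro hs32
    have hθeq : -(s - 1/2) = -θ := by
      rw [hθdef, min_eq_left (by linarith)]
    rw [hθeq]
    exact main
  · intro hs32
    have hθeq : -(1:ℝ) = -θ := by
      rw [hθdef, min_eq_right (by linarith)]
    rw [hθeq]
    exact main
end
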